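/- Let (Ω, 𝔽, μ) be a probability space, 𝒳 a measurable space, X : Ω → 𝒳 measurable, and Y : Ω → ℝ integrable. Let γ₀, γ̄, α₀, ᾱ : 𝒳 → ℝ be bounded measurable functions such that γ₀ ∘ X is a version of the conditional expectation of Y given the σ-algebra generated by X. Then the product-bias identity holds: ∫ ( α₀(X)·γ̄(X) + ᾱ(X)·(Y − γ̄(X)) ) dμ − ∫ α₀(X)·γ₀(X) dμ = − ∫ (ᾱ(X) − α₀(X))·(γ̄(X) − γ₀(X)) dμ. That is, the bias of the augmented Riesz weighting (doubly robust) score evaluated at nuisance estimates (γ̄, ᾱ) equals minus the expected product of the representer error and the regression error. -/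

import Mathlib

open MeasureTheory

/-- Product-bias identity: the bias of the augmented Riesz weighting (doubly
robust) score at nuisance estimates `(γ̄, ᾱ)` equals minus the expected product
of the representer error and the regression error. -/
theorem product_bias_identity
    {Ω : Type*} [MeasurableSpace Ω] (μ : Measure Ω) [IsProbabilityMeasure μ]
    {𝒳 : Type*} [MeasurableSpace 𝒳]
    (X : Ω → 𝒳) (hX : Measurable X)
    (Y : Ω → ℝ) (hY : Integrable Y μ)
    (γ₀ γbar α₀ αbar : 𝒳 → ℝ)
    (hγ₀ : Measurable γ₀) (hγbar : Measurable γbar)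
    (hα₀ : Measurable α₀) (hαbar : Measurable αbar)
    (hγ₀b : ∃ Cγ₀ : ℝ, ∀ x, |γ₀ x| ≤ Cγ₀)
    (hγbarb : ∃ Cγ : ℝ, ∀ x, |γbar x| ≤ Cγ)
    (hα₀b : ∃ Cα₀ : ℝ, ∀ x, |α₀ x| ≤ Cα₀)
    (hαbarb : ∃ Cα : ℝ, ∀ x, |αbar x| ≤ Cα)
    (hcond : (fun ω => γ₀ (X ω)) =ᵐ[μ] μ[Y | MeasurableSpace.comap X inferInstance]) :
    ∫ ω, (α₀ (X ω) * γbar (X ω) + αbar (X ω) * (Y ω - γbar (X ω))) ∂μ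
      - ∫ ω, α₀ (X ω) * γ₀ (X ω) ∂μ
      = - ∫ ω, (αbar (X ω) - α₀ (X ω)) * (γbar (X ω) - γ₀ (X ω)) ∂μ := by
  have hm := hX.comap_le
  -- bounded measurable functions of X are integrable
  have hIbdd : ∀ (f : 𝒳 → ℝ), Measurable f → (∃ C : ℝ, ∀ x, |f x| ≤ C) →
      Integrable (fun ω => f (X ω)) μ := by
    intro f hf ⟨C, hC⟩
    refine Integrable.mono' (integrable_const C) ((hf.comp hX).aestronglyMeasurable) ?_
    exact Filter.Eventually.of_forall fun ω => by simpa [Real.norm_eq_abs] using hC (X ω)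
  have hIprod : ∀ (f g : 𝒳 → ℝ), Measurable f → Measurable g →
      (∃ C : ℝ, ∀ x, |f x| ≤ C) → (∃ C : ℝ, ∀ x, |g x| ≤ C) →
      Integrable (fun ω => f (X ω) * g (X ω)) μ := by
    intro f g hf hg hfb ⟨C, hC⟩
    exact (hIbdd f hf hfb).bdd_mul ((hg.comp hX).aestronglyMeasurable)
      (Filter.Eventually.of_forall fun ω => by simpa [Real.norm_eq_abs] using hC (X ω))
      |>.congr (Filter.Eventually.of_forall fun ω => mul_comm _ _)
  have iA : Integrable (fun ω => α₀ (X ω) * γbar (X ω)) μ := hIprod _ _ hα₀ hγbar hα₀b hγbarb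
  have iC : Integrable (fun ω => αbar (X ω) * γbar (X ω)) μ := hIprod _ _ hαbar hγbar hαbarb hγbarb
  have iD : Integrable (fun ω => α₀ (X ω) * γ₀ (X ω)) μ := hIprod _ _ hα₀ hγ₀ hα₀b hγ₀b
  have iE : Integrable (fun ω => αbar (X ω) * γ₀ (X ω)) μ := hIprod _ _ hαbar hγ₀ hαbarb hγ₀b
  obtain ⟨Cα, hCα⟩ := hαbarb
  have iB : Integrable (fun ω => αbar (X ω) * Y ω) μ :=
    hY.bdd_mul ((hαbar.comp hX).aestronglyMeasurable)
      (Filter.Eventually.of_forall fun ω => by simpa [Real.norm_eq_abs] using hCα (X ω))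
  -- key step: E[ᾱ(X)·Y] = E[ᾱ(X)·γ₀(X)]
  have hfm : StronglyMeasurable[MeasurableSpace.comap X inferInstance] (fun ω => αbar (X ω)) :=
    (hαbar.comp (comap_measurable X)).stronglyMeasurable
  have hpull : μ[(fun ω => αbar (X ω)) * Y | MeasurableSpace.comap X inferInstance]
      =ᵐ[μ] (fun ω => αbar (X ω)) * μ[Y | MeasurableSpace.comap X inferInstance] :=
    condExp_mul_of_stronglyMeasurable_left hfm (iB.congr (Filter.Eventually.of_forall fun ω => rfl)) hY
  have hkey : ∫ ω, αbar (X ω) * Y ω ∂μ = ∫ ω, αbar (X ω) * γ₀ (X ω) ∂μ := by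
    calc ∫ ω, αbar (X ω) * Y ω ∂μ
        = ∫ ω, (μ[(fun ω => αbar (X ω)) * Y | MeasurableSpace.comap X inferInstance]) ω ∂μ :=
          (integral_condExp hm).symm
      _ = ∫ ω, ((fun ω => αbar (X ω)) * μ[Y | MeasurableSpace.comap X inferInstance]) ω ∂μ :=
          integral_congr_ae hpull
      _ = ∫ ω, αbar (X ω) * γ₀ (X ω) ∂μ := by
          refine integral_congr_ae ?_
          filter_upwards [hcond] with ω hω
          simp [← hω]
  -- algebra
  have expand1 : ∫ ω, (α₀ (X ω) * γbar (X ω) + αbar (X ω) * (Y ω - γbar (X ω))) ∂μ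
      = (∫ ω, α₀ (X ω) * γbar (X ω) ∂μ)
        + ((∫ ω, αbar (X ω) * Y ω ∂μ) - ∫ ω, αbar (X ω) * γbar (X ω) ∂μ) := by
    have h1 : ∫ ω, αbar (X ω) * (Y ω - γbar (X ω)) ∂μ
        = (∫ ω, αbar (X ω) * Y ω ∂μ) - ∫ ω, αbar (X ω) * γbar (X ω) ∂μ := by
      simp_rw [mul_sub]; exact integral_sub iB iC
    rw [integral_add iA (by simp_rw [mul_sub]; exact iB.sub iC), h1]
  have expand2 : ∫ ω, (αbar (X ω) - α₀ (X ω)) * (γbar (X ω) - γ₀ (X ω)) ∂μ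
      = ((∫ ω, αbar (X ω) * γbar (X ω) ∂μ) - ∫ ω, αbar (X ω) * γ₀ (X ω) ∂μ)
        - ((∫ ω, α₀ (X ω) * γbar (X ω) ∂μ) - ∫ ω, α₀ (X ω) * γ₀ (X ω) ∂μ) := by
    have i1 : Integrable (fun ω => αbar (X ω) * γbar (X ω) - αbar (X ω) * γ₀ (X ω)) μ :=
      iC.sub iE
    have i2 : Integrable (fun ω => α₀ (X ω) * γbar (X ω) - α₀ (X ω) * γ₀ (X ω)) μ :=
      iA.sub iD
    simp_rw [sub_mul, mul_sub]
    rw [integral_sub i1 i2, integral_sub iC iE, integral_sub iA iD]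
  rw [expand1, expand2]
  linarith [hkey]
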